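/- In the two-sided replicating character string model, the sequence ((V_ℓ, Ȳ_ℓ), ℓ ∈ ℤ) is strictly stationary under the conditional probability measure P_0(·) := P(· | Z_0 ∈ {M,I}), where V_ℓ = (Z_{ξ(ℓ)}, ξ_ℓ − ξ_{ℓ−1}) and Ȳ_ℓ = X̄_{ξ(ℓ)}. -/

import Mathlib

open MeasureTheory ProbabilityTheory Filter Set

/-- The absolute regularity (β-mixing) coefficient between two sub-σ-fields. -/
noncomputable def betaMix {Ω : Type*} {mΩ : MeasurableSpace Ω} (P : Measure Ω)
    (𝓐 𝓑 : MeasurableSpace Ω) : ℝ :=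
  sSup { x : ℝ | ∃ (I J : ℕ) (f : Fin I → Set Ω) (g : Fin J → Set Ω),
    (∀ i, MeasurableSet[𝓐] (f i)) ∧ (∀ j, MeasurableSet[𝓑] (g j)) ∧
    Pairwise (Function.onFun Disjoint f) ∧ (⋃ i, f i) = Set.univ ∧
    Pairwise (Function.onFun Disjoint g) ∧ (⋃ j, g j) = Set.univ ∧
    x = (1/2) * ∑ i, ∑ j,
      |(P (f i ∩ g j)).toReal - (P (f i)).toReal * (P (g j)).toReal| }

/-- The strong mixing (α) coefficient between two sub-σ-fields. -/
noncomputable def alphaMix {Ω : Type*} {mΩ : MeasurableSpace Ω} (P : Measure Ω)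
    (𝓐 𝓑 : MeasurableSpace Ω) : ℝ :=
  sSup { x : ℝ | ∃ (A B : Set Ω), MeasurableSet[𝓐] A ∧ MeasurableSet[𝓑] B ∧
    x = |(P (A ∩ B)).toReal - (P A).toReal * (P B).toReal| }

/-- β mixing coefficient of a two-sided sequence with gap `n`. -/
noncomputable def betaSeq {Ω E : Type*} {mΩ : MeasurableSpace Ω} [MeasurableSpace E]
    (X : ℤ → Ω → E) (n : ℕ) (P : Measure Ω) : ℝ :=
  betaMix P (⨆ k : {k : ℤ // k ≤ 0}, MeasurableSpace.comap (X k) inferInstance)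
            (⨆ k : {k : ℤ // (n : ℤ) ≤ k}, MeasurableSpace.comap (X k) inferInstance)

/-- α mixing coefficient of a two-sided sequence with gap `n`. -/
noncomputable def alphaSeq {Ω E : Type*} {mΩ : MeasurableSpace Ω} [MeasurableSpace E]
    (X : ℤ → Ω → E) (n : ℕ) (P : Measure Ω) : ℝ :=
  alphaMix P (⨆ k : {k : ℤ // k ≤ 0}, MeasurableSpace.comap (X k) inferInstance)
             (⨆ k : {k : ℤ // (n : ℤ) ≤ k}, MeasurableSpace.comap (X k) inferInstance)

/-- Strict stationarity of a two-sided sequence. -/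
def IsStationarySeq {Ω E : Type*} {mΩ : MeasurableSpace Ω} [MeasurableSpace E]
    (P : Measure Ω) (X : ℤ → Ω → E) : Prop :=
  ∀ j : ℤ, P.map (fun ω => fun k : ℤ => X (k + j) ω) = P.map (fun ω => fun k : ℤ => X k ω)

/-- Mutation / Insertion / Deletion symbols. -/
inductive MID | M | I | D
deriving DecidableEq

instance : MeasurableSpace MID := ⊤


section Stmt13AuxSection

namespace Stmt13Aux

open Classical in
/-- number of positions in `[a,b]` satisfying `pr`, as an integer -/
noncomputable def cnt (pr : ℤ → Prop) (a b : ℤ) : ℤ :=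
  (((Finset.Icc a b).filter pr).card : ℤ)

theorem cnt_congr {pr pr' : ℤ → Prop} (h : ∀ i, pr i ↔ pr' i) (a b : ℤ) :
    cnt pr a b = cnt pr' a b := by
  classical
  simp only [cnt]
  norm_cast
  congr 1
  apply Finset.filter_congr
  intro i _
  simp [h i]

theorem cnt_nonneg (pr : ℤ → Prop) (a b : ℤ) : 0 ≤ cnt pr a b := by
  simp [cnt]

theorem cnt_split (pr : ℤ → Prop) {a b c : ℤ} (h1 : a ≤ b + 1) (h2 : b ≤ c) :
    cnt pr a c = cnt pr a b + cnt pr (b+1) c := by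
  classical
  have hu : Finset.Icc a c = Finset.Icc a b ∪ Finset.Icc (b+1) c := by
    ext i; simp only [Finset.mem_Icc, Finset.mem_union]; omega
  have hd : Disjoint (Finset.Icc a b) (Finset.Icc (b+1) c) := by
    simp only [Finset.disjoint_left, Finset.mem_Icc]; intro i h h'; omega
  simp only [cnt, hu, Finset.filter_union]
  rw [Finset.card_union_of_disjoint (Finset.disjoint_filter_filter hd)]
  push_cast; ring

theorem cnt_one_le {pr : ℤ → Prop} {a b i : ℤ} (hi : pr i) (hai : a ≤ i) (hib : i ≤ b) :
    1 ≤ cnt pr a b := by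
  classical
  have : i ∈ (Finset.Icc a b).filter pr := by
    simp only [Finset.mem_filter, Finset.mem_Icc]
    exact ⟨⟨hai, hib⟩, hi⟩
  have := Finset.card_pos.2 ⟨i, this⟩
  simp only [cnt]
  exact_mod_cast this

theorem cnt_two_le {pr : ℤ → Prop} {a b i j : ℤ} (hi : pr i) (hj : pr j)
    (hai : a ≤ i) (hij : i < j) (hjb : j ≤ b) : 2 ≤ cnt pr a b := by
  classical
  have hsub : ({i, j} : Finset ℤ) ⊆ (Finset.Icc a b).filter pr := by
    intro x hx
    simp only [Finset.mem_insert, Finset.mem_singleton] at hx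
    rcases hx with rfl | rfl <;>
      simp only [Finset.mem_filter, Finset.mem_Icc] <;> constructor <;> first | omega | assumption
  have hcard : ({i, j} : Finset ℤ).card = 2 := by
    rw [Finset.card_insert_of_notMem (by simp; omega), Finset.card_singleton]
  have := Finset.card_le_card hsub
  rw [hcard] at this
  simp only [cnt]
  exact_mod_cast this

theorem cnt_mono_right {pr : ℤ → Prop} {a b c : ℤ} (h : b ≤ c) :
    cnt pr a b ≤ cnt pr a c := by
  classical
  have : (Finset.Icc a b).filter pr ⊆ (Finset.Icc a c).filter pr := by
    apply Finset.filter_subset_filter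
    exact Finset.Icc_subset_Icc_right h
  simp only [cnt]
  exact_mod_cast Finset.card_le_card this

theorem cnt_eq_one_right {pr : ℤ → Prop} {a b : ℤ} (hab : a ≤ b) (hb : pr b)
    (h : ∀ i, a ≤ i → i < b → ¬ pr i) : cnt pr a b = 1 := by
  classical
  have : (Finset.Icc a b).filter pr = {b} := by
    ext i
    simp only [Finset.mem_filter, Finset.mem_Icc, Finset.mem_singleton]
    constructor
    · rintro ⟨⟨h1, h2⟩, h3⟩
      by_contra hne
      exact h i h1 (lt_of_le_of_ne h2 hne) h3
    · rintro rfl; exact ⟨⟨hab, le_refl _⟩, hb⟩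
  simp [cnt, this]

theorem cnt_eq_one_left {pr : ℤ → Prop} {a b : ℤ} (hab : a ≤ b) (ha : pr a)
    (h : ∀ i, a < i → i ≤ b → ¬ pr i) : cnt pr a b = 1 := by
  classical
  have : (Finset.Icc a b).filter pr = {a} := by
    ext i
    simp only [Finset.mem_filter, Finset.mem_Icc, Finset.mem_singleton]
    constructor
    · rintro ⟨⟨h1, h2⟩, h3⟩
      by_contra hne
      exact h i (lt_of_le_of_ne h1 (Ne.symm hne)) h2 h3
    · rintro rfl; exact ⟨⟨le_refl _, hab⟩, ha⟩
  simp [cnt, this]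

theorem cnt_shift (pr : ℤ → Prop) (n a b : ℤ) :
    cnt (fun i => pr (i + n)) a b = cnt pr (a + n) (b + n) := by
  classical
  simp only [cnt]
  congr 1
  apply Finset.card_bij (fun i _ => i + n)
  · intro i hi
    simp only [Finset.mem_filter, Finset.mem_Icc] at hi ⊢
    exact ⟨⟨by omega, by omega⟩, hi.2⟩
  · intro i hi j hj hij; omega
  · intro j hj
    simp only [Finset.mem_filter, Finset.mem_Icc] at hj
    refine ⟨j - n, ?_, by omega⟩
    have hjn : j - n + n = j := by omega
    simp only [Finset.mem_filter, Finset.mem_Icc, hjn]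
    exact ⟨⟨by omega, by omega⟩, hj.2⟩


/-- characterization of the `ℓ`-th element of the set `{j | pr j}` under the
anchoring convention `e 0 ≤ 0 < e 1`. -/
def chi (pr : ℤ → Prop) (ℓ j : ℤ) : Prop :=
  pr j ∧ ((1 ≤ ℓ ∧ 1 ≤ j ∧ cnt pr 1 j = ℓ) ∨ (ℓ ≤ 0 ∧ j ≤ 0 ∧ cnt pr j 0 = 1 - ℓ))

theorem chi_unique {pr : ℤ → Prop} {ℓ j j' : ℤ} (h : chi pr ℓ j) (h' : chi pr ℓ j') :
    j = j' := by
  obtain ⟨hpj, hb⟩ := h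
  obtain ⟨hpj', hb'⟩ := h'
  by_contra hne
  -- wlog j < j'
  rcases lt_trichotomy j j' with hlt | heq | hlt
  · rcases hb with ⟨hl, hj, hc⟩ | ⟨hl, hj, hc⟩
    · rcases hb' with ⟨_, hj', hc'⟩ | ⟨hl', _, _⟩
      · have hsplit : cnt pr 1 j' = cnt pr 1 j + cnt pr (j+1) j' := cnt_split pr (by omega) (by omega)
        have h1 : 1 ≤ cnt pr (j+1) j' := cnt_one_le hpj' (by omega) (le_refl _)
        omega
      · omega
    · rcases hb' with ⟨hl', _, _⟩ | ⟨_, hj', hc'⟩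
      · omega
      · have hsplit : cnt pr j 0 = cnt pr j (j'-1) + cnt pr j' 0 := by
          have := cnt_split pr (a := j) (b := j'-1) (c := 0) (by omega) (by omega)
          simpa using this
        have h1 : 1 ≤ cnt pr j (j'-1) := cnt_one_le hpj (le_refl _) (by omega)
        omega
  · exact hne heq
  · rcases hb with ⟨hl, hj, hc⟩ | ⟨hl, hj, hc⟩
    · rcases hb' with ⟨_, hj', hc'⟩ | ⟨hl', _, _⟩
      · have hsplit : cnt pr 1 j = cnt pr 1 j' + cnt pr (j'+1) j := cnt_split pr (by omega) (by omega)
        have h1 : 1 ≤ cnt pr (j'+1) j := cnt_one_le hpj (by omega) (le_refl _)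
        omega
      · omega
    · rcases hb' with ⟨hl', _, _⟩ | ⟨_, hj', hc'⟩
      · omega
      · have hsplit : cnt pr j' 0 = cnt pr j' (j-1) + cnt pr j 0 := by
          have := cnt_split pr (a := j') (b := j-1) (c := 0) (by omega) (by omega)
          simpa using this
        have h1 : 1 ≤ cnt pr j' (j-1) := cnt_one_le hpj' (le_refl _) (by omega)
        omega

theorem chi_exists {pr : ℤ → Prop} (hfwd : ∀ n : ℤ, ∃ k > n, pr k)
    (hbwd : ∀ n : ℤ, ∃ k < n, pr k) (ℓ : ℤ) : ∃ j, chi pr ℓ j := by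
  rcases le_or_gt 1 ℓ with hl | hl
  · -- positive side, by upward induction from 1
    have key : ∀ ℓ' : ℤ, 1 ≤ ℓ' → ∃ j, 1 ≤ j ∧ pr j ∧ cnt pr 1 j = ℓ' := by
      intro ℓ'
      refine Int.le_induction (motive := fun t _ => ∃ j, 1 ≤ j ∧ pr j ∧ cnt pr 1 j = t) (m := 1) ?_ ?_ ℓ'
      ·
        obtain ⟨k, hk, hpk⟩ := hfwd 0
        obtain ⟨j, ⟨hj1, hjp⟩, hjmin⟩ :=
          Int.exists_least_of_bdd (P := fun j => 1 ≤ j ∧ pr j) ⟨1, fun z hz => hz.1⟩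
            ⟨k, by omega, hpk⟩
        refine ⟨j, hj1, hjp, ?_⟩
        exact cnt_eq_one_right hj1 hjp (fun i h1 h2 hpi => by
          have := hjmin i ⟨h1, hpi⟩; omega)
      · intro ℓ' hℓ' ih
        obtain ⟨j, hj1, hjp, hjc⟩ := ih
        obtain ⟨k, hk, hpk⟩ := hfwd j
        obtain ⟨j', ⟨hj'1, hj'p⟩, hj'min⟩ :=
          Int.exists_least_of_bdd (P := fun i => j < i ∧ pr i) ⟨j+1, fun z hz => by omega⟩
            ⟨k, hk, hpk⟩
        refine ⟨j', by omega, hj'p, ?_⟩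
        rw [cnt_split pr (a := 1) (b := j) (c := j') (by omega) (by omega), hjc]
        have : cnt pr (j+1) j' = 1 := cnt_eq_one_right (by omega) hj'p (fun i h1 h2 hpi => by
          have := hj'min i ⟨by omega, hpi⟩; omega)
        omega
    obtain ⟨j, h1, h2, h3⟩ := key ℓ hl
    exact ⟨j, h2, Or.inl ⟨hl, h1, h3⟩⟩
  · -- nonpositive side, by downward induction from 0
    have key : ∀ d : ℕ, ∃ j, j ≤ 0 ∧ pr j ∧ cnt pr j 0 = 1 + d := by
      intro d
      induction d with
      | zero =>
        obtain ⟨k, hk, hpk⟩ := hbwd 1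
        obtain ⟨j, ⟨hj1, hjp⟩, hjmax⟩ :=
          Int.exists_greatest_of_bdd (P := fun j => j ≤ 0 ∧ pr j) ⟨0, fun z hz => hz.1⟩
            ⟨k, by omega, hpk⟩
        refine ⟨j, hj1, hjp, ?_⟩
        have := cnt_eq_one_left hj1 hjp (fun i h1 h2 hpi => by
          have := hjmax i ⟨by omega, hpi⟩; omega)
        omega
      | succ d ih =>
        obtain ⟨j, hj1, hjp, hjc⟩ := ih
        obtain ⟨k, hk, hpk⟩ := hbwd j
        obtain ⟨j', ⟨hj'1, hj'p⟩, hj'max⟩ :=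
          Int.exists_greatest_of_bdd (P := fun i => i < j ∧ pr i) ⟨j, fun z hz => by omega⟩
            ⟨k, hk, hpk⟩
        refine ⟨j', by omega, hj'p, ?_⟩
        rw [cnt_split pr (a := j') (b := j - 1) (c := 0) (by omega) (by omega)]
        have h1 : cnt pr j' (j-1) = 1 := cnt_eq_one_left (by omega) hj'p (fun i hi1 hi2 hpi => by
          have := hj'max i ⟨by omega, hpi⟩; omega)
        have h2 : j - 1 + 1 = j := by omega
        rw [h1, h2, hjc]
        push_cast; ring
    obtain ⟨j, h1, h2, h3⟩ := key (1 - ℓ - 1).toNat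
    refine ⟨j, h2, Or.inr ⟨by omega, h1, ?_⟩⟩
    rw [h3]
    have hcast : ((1 - ℓ - 1).toNat : ℤ) = 1 - ℓ - 1 := Int.toNat_of_nonneg (by omega)
    omega


section Enum

variable {pr : ℤ → Prop} {e : ℤ → ℤ}

theorem enum_cnt_pos (hm : StrictMono e) (h0 : e 0 ≤ 0) (h1 : 0 < e 1)
    (hr : ∀ j, pr j ↔ ∃ k, e k = j) {k : ℤ} (hk : 1 ≤ k) :
    1 ≤ e k ∧ cnt pr 1 (e k) = k := by
  classical
  have hek : 1 ≤ e k := by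
    have := hm.le_iff_le.2 hk
    omega
  refine ⟨hek, ?_⟩
  have himg : (Finset.Icc 1 (e k)).filter pr = (Finset.Icc 1 k).image e := by
    ext i
    simp only [Finset.mem_filter, Finset.mem_Icc, Finset.mem_image]
    constructor
    · rintro ⟨⟨hi1, hi2⟩, hpi⟩
      obtain ⟨t, ht⟩ := (hr i).1 hpi
      refine ⟨t, ⟨?_, ?_⟩, ht⟩
      · by_contra hlt
        have : e t ≤ e 0 := hm.le_iff_le.2 (by omega)
        omega
      · have : e t ≤ e k := by omega
        exact hm.le_iff_le.1 this
    · rintro ⟨t, ⟨ht1, ht2⟩, rfl⟩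
      have he1 : e 1 ≤ e t := hm.le_iff_le.2 ht1
      have hek' : e t ≤ e k := hm.le_iff_le.2 ht2
      exact ⟨⟨by omega, hek'⟩, (hr (e t)).2 ⟨t, rfl⟩⟩
  simp only [cnt, himg]
  rw [Finset.card_image_of_injective _ hm.injective]
  rw [Int.card_Icc]
  simp only [Int.toNat_of_nonneg (by omega : (0:ℤ) ≤ k + 1 - 1)]
  omega

theorem enum_cnt_nonpos (hm : StrictMono e) (h0 : e 0 ≤ 0) (h1 : 0 < e 1)
    (hr : ∀ j, pr j ↔ ∃ k, e k = j) {k : ℤ} (hk : k ≤ 0) :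
    e k ≤ 0 ∧ cnt pr (e k) 0 = 1 - k := by
  classical
  have hek : e k ≤ 0 := by
    have := hm.le_iff_le.2 hk
    omega
  refine ⟨hek, ?_⟩
  have himg : (Finset.Icc (e k) 0).filter pr = (Finset.Icc k 0).image e := by
    ext i
    simp only [Finset.mem_filter, Finset.mem_Icc, Finset.mem_image]
    constructor
    · rintro ⟨⟨hi1, hi2⟩, hpi⟩
      obtain ⟨t, ht⟩ := (hr i).1 hpi
      refine ⟨t, ⟨?_, ?_⟩, ht⟩
      · have : e k ≤ e t := by omega
        exact hm.le_iff_le.1 this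
      · by_contra hlt
        have : e 1 ≤ e t := hm.le_iff_le.2 (by omega)
        omega
    · rintro ⟨t, ⟨ht1, ht2⟩, rfl⟩
      have hle1 : e k ≤ e t := hm.le_iff_le.2 ht1
      have hle2 : e t ≤ e 0 := hm.le_iff_le.2 ht2
      exact ⟨⟨hle1, by omega⟩, (hr (e t)).2 ⟨t, rfl⟩⟩
  simp only [cnt, himg]
  rw [Finset.card_image_of_injective _ hm.injective]
  rw [Int.card_Icc]
  simp only [Int.toNat_of_nonneg (by omega : (0:ℤ) ≤ 0 + 1 - k)]
  omega

theorem enum_chi (hm : StrictMono e) (h0 : e 0 ≤ 0) (h1 : 0 < e 1)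
    (hr : ∀ j, pr j ↔ ∃ k, e k = j) (k : ℤ) : chi pr k (e k) := by
  refine ⟨(hr (e k)).2 ⟨k, rfl⟩, ?_⟩
  rcases le_or_gt 1 k with hk | hk
  · obtain ⟨ha, hb⟩ := enum_cnt_pos hm h0 h1 hr hk
    exact Or.inl ⟨hk, ha, hb⟩
  · obtain ⟨ha, hb⟩ := enum_cnt_nonpos hm h0 h1 hr (k := k) (by omega)
    exact Or.inr ⟨by omega, ha, hb⟩

end Enum

open Classical in
/-- the `ℓ`-th element of `{j | pr j}` (anchored enumeration), when it exists. -/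
noncomputable def xihat (pr : ℤ → Prop) (ℓ : ℤ) : ℤ :=
  if h : ∃ j, chi pr ℓ j then h.choose else 0

theorem xihat_eq {pr : ℤ → Prop} {ℓ j : ℤ} (h : chi pr ℓ j) : xihat pr ℓ = j := by
  classical
  have hex : ∃ j', chi pr ℓ j' := ⟨j, h⟩
  simp only [xihat]
  rw [dif_pos hex]
  exact chi_unique hex.choose_spec h

theorem xihat_eq_iff {pr : ℤ → Prop} {ℓ j : ℤ} :
    xihat pr ℓ = j ↔ (chi pr ℓ j ∨ (j = 0 ∧ ∀ j', ¬ chi pr ℓ j')) := by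
  constructor
  · intro h
    by_cases he : ∃ j', chi pr ℓ j'
    · obtain ⟨j', hj'⟩ := he
      rw [xihat_eq hj'] at h
      exact Or.inl (h ▸ hj')
    · simp only [xihat] at h
      rw [dif_neg he] at h
      exact Or.inr ⟨h.symm, fun j' hj' => he ⟨j', hj'⟩⟩
  · rintro (h | ⟨rfl, h⟩)
    · exact xihat_eq h
    · simp only [xihat]
      rw [dif_neg (fun hex => (h hex.choose) hex.choose_spec)]

/-- index of `j` in the anchored enumeration of `{i | pr i}`. -/
noncomputable def kap (pr : ℤ → Prop) (j : ℤ) : ℤ :=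
  if 1 ≤ j then cnt pr 1 j else 1 - cnt pr j 0

theorem enum_kap {pr : ℤ → Prop} {e : ℤ → ℤ} (hm : StrictMono e) (h0 : e 0 ≤ 0)
    (h1 : 0 < e 1) (hr : ∀ j, pr j ↔ ∃ k, e k = j) (k : ℤ) : kap pr (e k) = k := by
  rcases le_or_gt 1 k with hk | hk
  · obtain ⟨ha, hb⟩ := enum_cnt_pos hm h0 h1 hr hk
    simp only [kap]
    rw [if_pos ha, hb]
  · obtain ⟨ha, hb⟩ := enum_cnt_nonpos hm h0 h1 hr (by omega : k ≤ 0)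
    simp only [kap]
    rw [if_neg (show ¬ (1 ≤ e k) by omega), hb]
    ring

/-- Key combinatorial fact: shifting by the first positive `pr`-position
shifts the anchored enumeration index by one. -/
theorem chi_shift {pr : ℤ → Prop} {n : ℤ} (hn : 1 ≤ n) (hpn : pr n)
    (hmid : ∀ i, 0 < i → i < n → ¬ pr i) (ℓ j : ℤ) :
    chi (fun i => pr (i + n)) ℓ j ↔ chi pr (ℓ + 1) (j + n) := by
  have hc1n : cnt pr 1 n = 1 := cnt_eq_one_right hn hpn (fun i h1 h2 => hmid i (by omega) h2)
  have hsh : ∀ a b : ℤ, cnt (fun i => pr (i + n)) a b = cnt pr (a + n) (b + n) :=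
    fun a b => cnt_shift pr n a b
  constructor
  · rintro ⟨hpj, hb⟩
    refine ⟨hpj, ?_⟩
    rcases hb with ⟨hl, hj, hc⟩ | ⟨hl, hj, hc⟩
    · -- ℓ ≥ 1
      rw [hsh] at hc
      rw [show (1:ℤ) + n = n + 1 by ring] at hc
      refine Or.inl ⟨by omega, by omega, ?_⟩
      rw [cnt_split pr (a := 1) (b := n) (c := j + n) (by omega) (by omega), hc1n]
      omega
    · rw [hsh] at hc
      rw [show (0:ℤ) + n = n by ring] at hc
      rcases lt_trichotomy ℓ 0 with hl0 | rfl | hl0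
      · -- ℓ ≤ -1 : show j + n ≤ 0
        have hjn : j + n ≤ 0 := by
          by_contra hpos
          -- then 1 ≤ j+n ≤ n, pr (j+n) forces j+n = n
          have hjn' : j + n = n := by
            by_contra hne
            exact hmid (j + n) (by omega) (by omega) hpj
          have : cnt pr (j + n) n = 1 :=
            cnt_eq_one_left (by omega) (by rwa [hjn']) (fun i h1 h2 => by omega)
          omega
        refine Or.inr ⟨by omega, by omega, ?_⟩
        have := cnt_split pr (a := j + n) (b := 0) (c := n) (by omega) (by omega)
        rw [show (0:ℤ) + 1 = 1 by ring] at this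
        omega
      · -- ℓ = 0 : show j = 0
        have hj0 : j = 0 := by
          by_contra hne
          have h2 : 2 ≤ cnt pr (j + n) n := cnt_two_le hpj hpn (le_refl _) (by omega) (le_refl _)
          omega
        subst hj0
        refine Or.inl ⟨by omega, by omega, ?_⟩
        simpa using hc1n
      · omega
  · rintro ⟨hpj, hb⟩
    refine ⟨hpj, ?_⟩
    rcases hb with ⟨hl, hj, hc⟩ | ⟨hl, hj, hc⟩
    · -- ℓ + 1 ≥ 1
      rcases lt_trichotomy ℓ 0 with hl0 | rfl | hl0
      · omega
      · -- ℓ = 0: cnt pr 1 (j+n) = 1, pr (j+n), 1 ≤ j+n; show j = 0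
        refine Or.inr ⟨le_refl _, ?_, ?_⟩
        · -- j ≤ 0
          by_contra hpos
          have : 2 ≤ cnt pr 1 (j + n) := cnt_two_le hpn hpj (by omega) (by omega) (le_refl _)
          omega
        · have hj0 : j = 0 := by
            by_contra hne
            -- j < 0 impossible? if j < 0 then j + n < n, 1 ≤ j + n, pr (j+n) contra hmid
            rcases lt_trichotomy j 0 with hjneg | rfl | hjpos
            · exact hmid (j + n) (by omega) (by omega) hpj
            · exact hne rfl
            · have : 2 ≤ cnt pr 1 (j + n) := cnt_two_le hpn hpj (by omega) (by omega) (le_refl _)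
              omega
          subst hj0
          rw [hsh]
          simp only [zero_add, sub_zero]
          exact cnt_eq_one_right (le_refl _) hpn (fun i h1 h2 => by omega)
      · -- ℓ ≥ 1
        have hj1 : 1 ≤ j := by
          by_contra hle
          have hmono : cnt pr 1 (j + n) ≤ cnt pr 1 n := cnt_mono_right (a := 1) (by omega)
          omega
        refine Or.inl ⟨hl0, hj1, ?_⟩
        rw [hsh]
        rw [show (1:ℤ) + n = n + 1 by ring]
        have := cnt_split pr (a := 1) (b := n) (c := j + n) (by omega) (by omega)
        omega
    · -- ℓ + 1 ≤ 0, so ℓ ≤ -1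
      refine Or.inr ⟨by omega, by omega, ?_⟩
      rw [hsh]
      rw [show (0:ℤ) + n = n by ring]
      have := cnt_split pr (a := j + n) (b := 0) (c := n) (by omega) (by omega)
      rw [show (0:ℤ) + 1 = 1 by ring] at this
      omega

end Stmt13Aux

namespace Stmt13Aux

abbrev PS := ℤ → ℝ × MID

def pzz (w : PS) (j : ℤ) : Prop := (w j).2 = MID.M ∨ (w j).2 = MID.I

def qzz (w : PS) (j : ℤ) : Prop := (w j).2 = MID.M ∨ (w j).2 = MID.D

noncomputable def xiw (ℓ : ℤ) (w : PS) : ℤ := xihat (pzz w) ℓ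

open Classical in
noncomputable def Xbarw (j : ℤ) (w : PS) : ℝ :=
  if qzz w j then (w (kap (qzz w) j)).1 else 0

noncomputable def Ww (ℓ : ℤ) (w : PS) : (MID × ℤ) × ℝ :=
  (((w (xiw ℓ w)).2, xiw ℓ w - xiw (ℓ - 1) w), Xbarw (xiw ℓ w) w)

noncomputable def Phiw (j : ℤ) (w : PS) : ℤ → (MID × ℤ) × ℝ := fun k => Ww (k + j) w

def Tmn (m n : ℤ) (w : PS) : PS := fun k => ((w (k + m)).1, (w (k + n)).2)

def Ghat : Set PS :=
  {w | ∀ n : ℤ, (∃ k > n, pzz w k) ∧ (∃ k < n, pzz w k) ∧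
    (∃ k > n, qzz w k) ∧ (∃ k < n, qzz w k)}

def Chat (n m : ℤ) : Set PS :=
  {w | 1 ≤ n ∧ pzz w 0 ∧ pzz w n ∧ (∀ i, 0 < i → i < n → ¬ pzz w i) ∧
    cnt (qzz w) 1 n = m}

def Dhat (n m : ℤ) : Set PS :=
  {w | 1 ≤ n ∧ pzz w 0 ∧ pzz w (-n) ∧ (∀ i, -n < i → i < 0 → ¬ pzz w i) ∧
    cnt (qzz w) (1 - n) 0 = m}

def A0 : Set PS := {w | pzz w 0}

section Meas

theorem meas_snd (j : ℤ) : Measurable (fun w : PS => (w j).2) :=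
  (measurable_pi_apply j).snd

theorem meas_fst (j : ℤ) : Measurable (fun w : PS => (w j).2) :=
  (measurable_pi_apply j).snd

theorem measSet_pzz (j : ℤ) : MeasurableSet {w : PS | pzz w j} := by
  have h : {w : PS | pzz w j} = (fun w : PS => (w j).2) ⁻¹' {MID.M, MID.I} := by
    ext w; simp [pzz]
  rw [h]
  exact meas_snd j MeasurableSpace.measurableSet_top

theorem measSet_qzz (j : ℤ) : MeasurableSet {w : PS | qzz w j} := by
  have h : {w : PS | qzz w j} = (fun w : PS => (w j).2) ⁻¹' {MID.M, MID.D} := by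
    ext w; simp [qzz]
  rw [h]
  exact meas_snd j MeasurableSpace.measurableSet_top

open Classical in
theorem cnt_eq_sum (pr : ℤ → Prop) (a b : ℤ) :
    cnt pr a b = ∑ i ∈ Finset.Icc a b, (if pr i then (1:ℤ) else 0) := by
  classical
  simp only [cnt, Finset.card_filter]
  push_cast
  rfl

theorem meas_cnt_pzz (a b : ℤ) : Measurable (fun w : PS => cnt (pzz w) a b) := by
  simp only [cnt_eq_sum]
  apply Finset.measurable_sum
  intro i _
  exact Measurable.ite (measSet_pzz i) measurable_const measurable_const

theorem meas_cnt_qzz (a b : ℤ) : Measurable (fun w : PS => cnt (qzz w) a b) := by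
  simp only [cnt_eq_sum]
  apply Finset.measurable_sum
  intro i _
  exact Measurable.ite (measSet_qzz i) measurable_const measurable_const

theorem measSet_chi_pzz (ℓ j : ℤ) : MeasurableSet {w : PS | chi (pzz w) ℓ j} := by
  have h : {w : PS | chi (pzz w) ℓ j} =
      {w | pzz w j} ∩
        (({_w : PS | 1 ≤ ℓ} ∩ {_w : PS | 1 ≤ j} ∩ (fun w : PS => cnt (pzz w) 1 j) ⁻¹' {ℓ}) ∪
         ({_w : PS | ℓ ≤ 0} ∩ {_w : PS | j ≤ 0} ∩ (fun w : PS => cnt (pzz w) j 0) ⁻¹' {1 - ℓ})) := by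
    ext w
    simp only [chi, Set.mem_inter_iff, Set.mem_union, Set.mem_setOf_eq, Set.mem_preimage,
      Set.mem_singleton_iff]
    tauto
  rw [h]
  refine (measSet_pzz j).inter (MeasurableSet.union ?_ ?_)
  · exact ((MeasurableSet.const _).inter (MeasurableSet.const _)).inter
      (meas_cnt_pzz 1 j (measurableSet_singleton ℓ))
  · exact ((MeasurableSet.const _).inter (MeasurableSet.const _)).inter
      (meas_cnt_pzz j 0 (measurableSet_singleton (1 - ℓ)))

theorem meas_xiw (ℓ : ℤ) : Measurable (xiw ℓ) := by
  apply measurable_to_countable'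
  intro j
  have h : (xiw ℓ) ⁻¹' {j} =
      {w : PS | chi (pzz w) ℓ j} ∪
        ({_w : PS | j = 0} ∩ ⋂ j' : ℤ, {w : PS | chi (pzz w) ℓ j'}ᶜ) := by
    ext w
    simp only [Set.mem_preimage, Set.mem_singleton_iff, Set.mem_union, Set.mem_inter_iff,
      Set.mem_setOf_eq, Set.mem_iInter, Set.mem_compl_iff, xiw, xihat_eq_iff]
    try tauto
  rw [h]
  exact (measSet_chi_pzz ℓ j).union ((MeasurableSet.const _).inter
    (MeasurableSet.iInter fun j' => (measSet_chi_pzz ℓ j').compl))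

theorem meas_kap_qzz (j : ℤ) : Measurable (fun w : PS => kap (qzz w) j) := by
  by_cases h : 1 ≤ j
  · simp only [kap, if_pos h]
    exact meas_cnt_qzz 1 j
  · simp only [kap, if_neg h]
    exact measurable_const.sub (meas_cnt_qzz j 0)

theorem measurable_bind_int {β : Type*} [MeasurableSpace β] {g : PS → ℤ}
    (hg : Measurable g) {F : ℤ → PS → β} (hF : ∀ k, Measurable (F k)) :
    Measurable fun w => F (g w) w := by
  intro t ht
  have h : (fun w => F (g w) w) ⁻¹' t = ⋃ k : ℤ, (g ⁻¹' {k} ∩ (F k) ⁻¹' t) := by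
    ext w
    simp only [Set.mem_preimage, Set.mem_iUnion, Set.mem_inter_iff, Set.mem_singleton_iff]
    constructor
    · intro hw; exact ⟨g w, rfl, hw⟩
    · rintro ⟨k, rfl, hw⟩; exact hw
  rw [h]
  exact MeasurableSet.iUnion fun k => (hg (measurableSet_singleton k)).inter (hF k ht)

theorem meas_Xbarw (j : ℤ) : Measurable (Xbarw j) := by
  apply Measurable.ite (measSet_qzz j)
  · exact measurable_bind_int (meas_kap_qzz j) (fun k => (measurable_pi_apply k).fst)
  · exact measurable_const

theorem meas_Ww (ℓ : ℤ) : Measurable (Ww ℓ) := by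
  apply Measurable.prodMk
  · apply Measurable.prodMk
    · exact measurable_bind_int (meas_xiw ℓ) (fun k => meas_snd k)
    · exact (meas_xiw ℓ).sub (meas_xiw (ℓ - 1))
  · exact measurable_bind_int (meas_xiw ℓ) (fun k => meas_Xbarw k)

theorem meas_Phiw (j : ℤ) : Measurable (Phiw j) :=
  measurable_pi_lambda _ fun k => meas_Ww (k + j)

theorem meas_Tmn (m n : ℤ) : Measurable (Tmn m n) :=
  measurable_pi_lambda _ fun k =>
    ((measurable_pi_apply (k + m)).fst.prodMk (measurable_pi_apply (k + n)).snd)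

theorem measSet_imp_pzz (n : ℤ) (i : ℤ) :
    MeasurableSet {w : PS | 0 < i → i < n → ¬ pzz w i} := by
  by_cases h1 : 0 < i
  · by_cases h2 : i < n
    · have h : {w : PS | 0 < i → i < n → ¬ pzz w i} = {w | pzz w i}ᶜ := by
        ext w; simp [h1, h2]
      rw [h]; exact (measSet_pzz i).compl
    · have h : {w : PS | 0 < i → i < n → ¬ pzz w i} = Set.univ := by
        ext w; simp [h2]
      rw [h]; exact MeasurableSet.univ
  · have h : {w : PS | 0 < i → i < n → ¬ pzz w i} = Set.univ := by
      ext w; simp [h1]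
    rw [h]; exact MeasurableSet.univ

theorem measSet_Chat (n m : ℤ) : MeasurableSet (Chat n m) := by
  have h : Chat n m = {_w : PS | 1 ≤ n} ∩ {w | pzz w 0} ∩ {w | pzz w n} ∩
      (⋂ i : ℤ, {w : PS | 0 < i → i < n → ¬ pzz w i}) ∩
      (fun w : PS => cnt (qzz w) 1 n) ⁻¹' {m} := by
    ext w
    simp only [Chat, Set.mem_inter_iff, Set.mem_setOf_eq, Set.mem_iInter, Set.mem_preimage,
      Set.mem_singleton_iff]
    tauto
  rw [h]
  exact ((((MeasurableSet.const _).inter (measSet_pzz 0)).inter (measSet_pzz n)).inter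
    (MeasurableSet.iInter fun i => measSet_imp_pzz n i)).inter
    (meas_cnt_qzz 1 n (measurableSet_singleton m))

theorem measSet_imp_pzz' (n : ℤ) (i : ℤ) :
    MeasurableSet {w : PS | -n < i → i < 0 → ¬ pzz w i} := by
  by_cases h1 : -n < i
  · by_cases h2 : i < 0
    · have h : {w : PS | -n < i → i < 0 → ¬ pzz w i} = {w | pzz w i}ᶜ := by
        ext w; simp [h1, h2]
      rw [h]; exact (measSet_pzz i).compl
    · have h : {w : PS | -n < i → i < 0 → ¬ pzz w i} = Set.univ := by
        ext w; simp [h2]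
      rw [h]; exact MeasurableSet.univ
  · have h : {w : PS | -n < i → i < 0 → ¬ pzz w i} = Set.univ := by
      ext w; simp [h1]
    rw [h]; exact MeasurableSet.univ

theorem measSet_Dhat (n m : ℤ) : MeasurableSet (Dhat n m) := by
  have h : Dhat n m = {_w : PS | 1 ≤ n} ∩ {w | pzz w 0} ∩ {w | pzz w (-n)} ∩
      (⋂ i : ℤ, {w : PS | -n < i → i < 0 → ¬ pzz w i}) ∩
      (fun w : PS => cnt (qzz w) (1 - n) 0) ⁻¹' {m} := by
    ext w
    simp only [Dhat, Set.mem_inter_iff, Set.mem_setOf_eq, Set.mem_iInter, Set.mem_preimage,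
      Set.mem_singleton_iff]
    tauto
  rw [h]
  exact ((((MeasurableSet.const _).inter (measSet_pzz 0)).inter (measSet_pzz (-n))).inter
    (MeasurableSet.iInter fun i => measSet_imp_pzz' n i)).inter
    (meas_cnt_qzz (1 - n) 0 (measurableSet_singleton m))

theorem measSet_A0 : MeasurableSet A0 := measSet_pzz 0

theorem measSet_Ghat : MeasurableSet Ghat := by
  have h : Ghat = ⋂ n : ℤ,
      ((⋃ k : ℤ, ⋃ _ : k > n, {w : PS | pzz w k}) ∩
       (⋃ k : ℤ, ⋃ _ : k < n, {w : PS | pzz w k}) ∩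
       (⋃ k : ℤ, ⋃ _ : k > n, {w : PS | qzz w k}) ∩
       (⋃ k : ℤ, ⋃ _ : k < n, {w : PS | qzz w k})) := by
    ext w
    simp only [Ghat, Set.mem_iInter, Set.mem_inter_iff, Set.mem_iUnion, Set.mem_setOf_eq]
    constructor
    · intro hw n
      have := hw n
      tauto
    · intro hw n
      have := hw n
      tauto
  rw [h]
  refine MeasurableSet.iInter fun n => ?_
  refine MeasurableSet.inter (MeasurableSet.inter (MeasurableSet.inter ?_ ?_) ?_) ?_ <;>
    exact MeasurableSet.iUnion fun k => MeasurableSet.iUnion fun _ =>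
      (by first | exact measSet_pzz k | exact measSet_qzz k)

end Meas

end Stmt13Aux

namespace Stmt13Aux

section Pointwise

variable {w : PS} {n m : ℤ}

theorem Ghat_fwd_p (hw : w ∈ Ghat) (t : ℤ) : ∃ k > t, pzz w k := (hw t).1
theorem Ghat_bwd_p (hw : w ∈ Ghat) (t : ℤ) : ∃ k < t, pzz w k := (hw t).2.1

theorem chi_exists_pzz (hw : w ∈ Ghat) (ℓ : ℤ) : ∃ j, chi (pzz w) ℓ j :=
  chi_exists (fun t => (hw t).1) (fun t => (hw t).2.1) ℓ

theorem Tmn_pzz (j : ℤ) : pzz (Tmn m n w) j ↔ pzz w (j + n) := Iff.rfl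

theorem Tmn_qzz (j : ℤ) : qzz (Tmn m n w) j ↔ qzz w (j + n) := Iff.rfl

theorem cnt_pzz_Tmn (a b : ℤ) :
    cnt (pzz (Tmn m n w)) a b = cnt (pzz w) (a + n) (b + n) :=
  (cnt_congr (fun i => Iff.rfl) a b).trans (cnt_shift (pzz w) n a b)

theorem cnt_qzz_Tmn (a b : ℤ) :
    cnt (qzz (Tmn m n w)) a b = cnt (qzz w) (a + n) (b + n) :=
  (cnt_congr (fun i => Iff.rfl) a b).trans (cnt_shift (qzz w) n a b)

theorem xiw_Tmn (hG : w ∈ Ghat) (hC : w ∈ Chat n m) (ℓ : ℤ) :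
    xiw ℓ (Tmn m n w) = xiw (ℓ + 1) w - n := by
  obtain ⟨hn, hp0, hpn, hmid, hcnt⟩ := hC
  obtain ⟨j, hj⟩ := chi_exists_pzz hG (ℓ + 1)
  have h1 : xiw (ℓ + 1) w = j := xihat_eq hj
  have hj2 : chi (pzz w) (ℓ + 1) ((j - n) + n) := by rwa [sub_add_cancel]
  have hj' : chi (fun i => pzz w (i + n)) ℓ (j - n) :=
    (chi_shift hn hpn hmid ℓ (j - n)).mpr hj2
  have h2 : xiw ℓ (Tmn m n w) = j - n := xihat_eq hj'
  omega

theorem kap_qzz_Tmn (hn : 1 ≤ n) (hm : cnt (qzz w) 1 n = m) (j : ℤ) (hq : qzz w (j + n)) :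
    kap (qzz (Tmn m n w)) j = kap (qzz w) (j + n) - m := by
  have hshift : ∀ a b : ℤ, cnt (qzz (Tmn m n w)) a b = cnt (qzz w) (a + n) (b + n) :=
    fun a b => cnt_qzz_Tmn a b
  rcases le_or_gt 1 j with hj | hj
  · -- j ≥ 1
    rw [kap, if_pos hj, kap, if_pos (by omega : 1 ≤ j + n)]
    rw [hshift 1 j, show (1:ℤ) + n = n + 1 by ring]
    have := cnt_split (qzz w) (a := 1) (b := n) (c := j + n) (by omega) (by omega)
    omega
  · rcases le_or_gt 1 (j + n) with hjn | hjn
    · -- j ≤ 0 < j + n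
      rw [kap, if_neg (by omega), kap, if_pos hjn]
      rw [hshift j 0, show (0:ℤ) + n = n by ring]
      have h1 := cnt_split (qzz w) (a := 1) (b := j + n) (c := n) (by omega) (by omega)
      have h2 := cnt_split (qzz w) (a := j + n) (b := j + n) (c := n) (by omega) (by omega)
      have h3 : cnt (qzz w) (j + n) (j + n) = 1 :=
        cnt_eq_one_right (le_refl _) hq (fun i hi1 hi2 => by omega)
      omega
    · -- j + n ≤ 0
      rw [kap, if_neg (by omega), kap, if_neg (by omega)]
      rw [hshift j 0, show (0:ℤ) + n = n by ring]
      have h1 := cnt_split (qzz w) (a := j + n) (b := 0) (c := n) (by omega) (by omega)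
      rw [show (0:ℤ) + 1 = 1 by ring] at h1
      omega

theorem Xbarw_Tmn (hn : 1 ≤ n) (hm : cnt (qzz w) 1 n = m) (j : ℤ) :
    Xbarw j (Tmn m n w) = Xbarw (j + n) w := by
  classical
  by_cases hq : qzz w (j + n)
  · have hq' : qzz (Tmn m n w) j := hq
    rw [Xbarw, if_pos hq', Xbarw, if_pos hq]
    have hk := kap_qzz_Tmn hn hm j hq
    rw [hk]
    show (w (kap (qzz w) (j + n) - m + m)).1 = _
    rw [sub_add_cancel]
  · have hq' : ¬ qzz (Tmn m n w) j := hq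
    rw [Xbarw, if_neg hq', Xbarw, if_neg hq]

theorem Ww_Tmn (hG : w ∈ Ghat) (hC : w ∈ Chat n m) (ℓ : ℤ) :
    Ww ℓ (Tmn m n w) = Ww (ℓ + 1) w := by
  have hn : 1 ≤ n := hC.1
  have hm : cnt (qzz w) 1 n = m := hC.2.2.2.2
  have h1 : xiw ℓ (Tmn m n w) = xiw (ℓ + 1) w - n := xiw_Tmn hG hC ℓ
  have h2 : xiw (ℓ - 1) (Tmn m n w) = xiw ℓ w - n := by
    have := xiw_Tmn hG hC (ℓ - 1)
    rwa [show ℓ - 1 + 1 = ℓ by ring] at this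
  have h3 : Ww ℓ (Tmn m n w) =
      (((Tmn m n w (xiw ℓ (Tmn m n w))).2,
        xiw ℓ (Tmn m n w) - xiw (ℓ - 1) (Tmn m n w)),
        Xbarw (xiw ℓ (Tmn m n w)) (Tmn m n w)) := rfl
  rw [h3, h1, h2]
  have hz : (Tmn m n w (xiw (ℓ + 1) w - n)).2 = (w (xiw (ℓ + 1) w)).2 := by
    show (w (xiw (ℓ + 1) w - n + n)).2 = _
    rw [sub_add_cancel]
  have hx : Xbarw (xiw (ℓ + 1) w - n) (Tmn m n w) = Xbarw (xiw (ℓ + 1) w) w := by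
    rw [Xbarw_Tmn hn hm, sub_add_cancel]
  rw [hz, hx]
  show _ = (((w (xiw (ℓ + 1) w)).2, xiw (ℓ + 1) w - xiw (ℓ + 1 - 1) w),
    Xbarw (xiw (ℓ + 1) w) w)
  rw [show ℓ + 1 - 1 = ℓ by ring]
  congr 2
  ring

theorem Tmn_mem_Dhat : Tmn m n w ∈ Dhat n m ↔ w ∈ Chat n m := by
  constructor
  · rintro ⟨hn, hp0, hpn, hmid, hcnt⟩
    rw [Tmn_pzz] at hp0 hpn
    rw [show (0:ℤ) + n = n by ring] at hp0
    rw [show -n + n = (0:ℤ) by ring] at hpn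
    refine ⟨hn, hpn, hp0, fun i hi1 hi2 => ?_, ?_⟩
    · have := hmid (i - n) (by omega) (by omega)
      rwa [Tmn_pzz, sub_add_cancel] at this
    · rw [cnt_qzz_Tmn] at hcnt
      rw [show (1:ℤ) - n + n = 1 by ring, show (0:ℤ) + n = n by ring] at hcnt
      exact hcnt
  · rintro ⟨hn, hp0, hpn, hmid, hcnt⟩
    refine ⟨hn, ?_, ?_, fun i hi1 hi2 => ?_, ?_⟩
    · rw [Tmn_pzz, show (0:ℤ) + n = n by ring]; exact hpn
    · rw [Tmn_pzz, show -n + n = (0:ℤ) by ring]; exact hp0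
    · rw [Tmn_pzz]; exact hmid (i + n) (by omega) (by omega)
    · rw [cnt_qzz_Tmn, show (1:ℤ) - n + n = 1 by ring, show (0:ℤ) + n = n by ring]
      exact hcnt

theorem Tmn_mem_Ghat : Tmn m n w ∈ Ghat ↔ w ∈ Ghat := by
  constructor
  · intro hw t
    obtain ⟨⟨a, ha1, ha2⟩, ⟨b, hb1, hb2⟩, ⟨c, hc1, hc2⟩, ⟨d, hd1, hd2⟩⟩ := hw (t - n)
    rw [Tmn_pzz] at ha2 hb2
    rw [Tmn_qzz] at hc2 hd2
    exact ⟨⟨a + n, by omega, ha2⟩, ⟨b + n, by omega, hb2⟩,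
      ⟨c + n, by omega, hc2⟩, ⟨d + n, by omega, hd2⟩⟩
  · intro hw t
    obtain ⟨⟨a, ha1, ha2⟩, ⟨b, hb1, hb2⟩, ⟨c, hc1, hc2⟩, ⟨d, hd1, hd2⟩⟩ := hw (t + n)
    refine ⟨⟨a - n, by omega, ?_⟩, ⟨b - n, by omega, ?_⟩,
      ⟨c - n, by omega, ?_⟩, ⟨d - n, by omega, ?_⟩⟩
    · rw [Tmn_pzz, sub_add_cancel]; exact ha2
    · rw [Tmn_pzz, sub_add_cancel]; exact hb2
    · rw [Tmn_qzz, sub_add_cancel]; exact hc2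
    · rw [Tmn_qzz, sub_add_cancel]; exact hd2

theorem exists_Chat (hG : w ∈ Ghat) (h0 : w ∈ A0) : ∃ n m : ℤ, w ∈ Chat n m := by
  obtain ⟨k, hk1, hk2⟩ := (hG 0).1
  obtain ⟨j, ⟨hj1, hjp⟩, hjmin⟩ :=
    Int.exists_least_of_bdd (P := fun j => 1 ≤ j ∧ pzz w j) ⟨1, fun z hz => hz.1⟩
      ⟨k, by omega, hk2⟩
  exact ⟨j, cnt (qzz w) 1 j, hj1, h0, hjp,
    fun i hi1 hi2 hpi => by have := hjmin i ⟨by omega, hpi⟩; omega, rfl⟩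

theorem exists_Dhat (hG : w ∈ Ghat) (h0 : w ∈ A0) : ∃ n m : ℤ, w ∈ Dhat n m := by
  obtain ⟨k, hk1, hk2⟩ := (hG 0).2.1
  obtain ⟨j, ⟨hj1, hjp⟩, hjmax⟩ :=
    Int.exists_greatest_of_bdd (P := fun j => j ≤ -1 ∧ pzz w j) ⟨-1, fun z hz => hz.1⟩
      ⟨k, by omega, hk2⟩
  refine ⟨-j, cnt (qzz w) (1 + j) 0, by omega, h0, by rwa [neg_neg], ?_, ?_⟩
  · intro i hi1 hi2 hpi
    have := hjmax i ⟨by omega, hpi⟩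
    omega
  · rw [show (1 : ℤ) - -j = 1 + j by ring]

theorem Chat_unique (h : w ∈ Chat n m) {n' m' : ℤ} (h' : w ∈ Chat n' m') :
    n = n' ∧ m = m' := by
  obtain ⟨hn, hp0, hpn, hmid, hcnt⟩ := h
  obtain ⟨hn', hp0', hpn', hmid', hcnt'⟩ := h'
  have he : n = n' := by
    rcases lt_trichotomy n n' with hlt | heq | hlt
    · exact absurd hpn (hmid' n (by omega) (by omega))
    · exact heq
    · exact absurd hpn' (hmid n' (by omega) (by omega))
  subst he
  exact ⟨rfl, by omega⟩

theorem Dhat_unique (h : w ∈ Dhat n m) {n' m' : ℤ} (h' : w ∈ Dhat n' m') :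
    n = n' ∧ m = m' := by
  obtain ⟨hn, hp0, hpn, hmid, hcnt⟩ := h
  obtain ⟨hn', hp0', hpn', hmid', hcnt'⟩ := h'
  have he : n = n' := by
    rcases lt_trichotomy n n' with hlt | heq | hlt
    · exact absurd hpn (hmid' (-n) (by omega) (by omega))
    · exact heq
    · exact absurd hpn' (hmid (-n') (by omega) (by omega))
  subst he
  exact ⟨rfl, by omega⟩

end Pointwise

end Stmt13Aux

end Stmt13AuxSection

open Stmt13Aux

/-- Lemma 4.3: ((V_ℓ, Ȳ_ℓ), ℓ ∈ ℤ) is strictly stationary under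
P₀ = P(·|Z₀ ∈ {M,I}), where V_ℓ = (Z_{ξ(ℓ)}, ξ_ℓ − ξ_{ℓ−1}) and Ȳ_ℓ = X̄_{ξ(ℓ)}. -/
theorem stmt13 {Ω : Type*} {mΩ : MeasurableSpace Ω} (P : Measure Ω) [IsProbabilityMeasure P]
    (X : ℤ → Ω → ℝ) (hmX : ∀ k, Measurable (X k)) (hXpos : ∀ k ω, 0 < X k ω)
    (hXstat : IsStationarySeq P X)
    (Z : ℤ → Ω → MID) (hmZ : ∀ k, Measurable (Z k)) (hZstat : IsStationarySeq P Z)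
    (hZerg : Ergodic (fun f : ℤ → MID => fun k => f (k + 1))
      (P.map (fun ω (k : ℤ) => Z k ω)))
    (hZpos : ∀ s : MID, P {ω | Z 0 ω = s} ≠ 0)
    (hinf : ∀ ω (s : MID) (n : ℤ), (∃ k > n, Z k ω = s) ∧ (∃ k < n, Z k ω = s))
    (hindep : IndepFun (fun ω (k : ℤ) => X k ω) (fun ω (k : ℤ) => Z k ω) P)
    (ζ : ℤ → Ω → ℤ) (hζmono : ∀ ω, StrictMono (ζ · ω))
    (hζ0 : ∀ ω, ζ 0 ω ≤ 0 ∧ 0 < ζ 1 ω)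
    (hζrange : ∀ ω j, (Z j ω = MID.M ∨ Z j ω = MID.D) ↔ ∃ k, ζ k ω = j)
    (Xbar : ℤ → Ω → ℝ)
    (hXbar1 : ∀ ω k, Xbar (ζ k ω) ω = X k ω)
    (hXbar2 : ∀ ω j, (∀ k, ζ k ω ≠ j) → Xbar j ω = 0)
    (ξ : ℤ → Ω → ℤ) (hξmono : ∀ ω, StrictMono (ξ · ω))
    (hξ0 : ∀ ω, ξ 0 ω ≤ 0 ∧ 0 < ξ 1 ω)
    (hξrange : ∀ ω j, (Z j ω = MID.M ∨ Z j ω = MID.I) ↔ ∃ k, ξ k ω = j) :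
    IsStationarySeq (P[|{ω | Z 0 ω = MID.M ∨ Z 0 ω = MID.I}])
      (fun ℓ ω => ((Z (ξ ℓ ω) ω, ξ ℓ ω - ξ (ℓ - 1) ω), Xbar (ξ ℓ ω) ω)) := by
  classical
  intro j
  -- the path map into the two-sided sequence space
  set path : Ω → PS := fun ω k => (X k ω, Z k ω) with hpathdef
  have hpath : Measurable path := measurable_pi_lambda _ fun k => (hmX k).prodMk (hmZ k)
  -- transport of the enumeration functions
  have hxiw : ∀ ω ℓ, xiw ℓ (path ω) = ξ ℓ ω := by
    intro ω ℓ
    exact xihat_eq (enum_chi (hξmono ω) (hξ0 ω).1 (hξ0 ω).2 (fun t => hξrange ω t) ℓ)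
  have hXbarw : ∀ ω jj, Xbarw jj (path ω) = Xbar jj ω := by
    intro ω jj
    by_cases hq : Z jj ω = MID.M ∨ Z jj ω = MID.D
    · obtain ⟨k, hk⟩ := (hζrange ω jj).1 hq
      have hkap : kap (qzz (path ω)) jj = k := by
        have := enum_kap (hζmono ω) (hζ0 ω).1 (hζ0 ω).2 (fun t => hζrange ω t) k
        rwa [hk] at this
      have hq' : qzz (path ω) jj := hq
      simp only [Xbarw]
      rw [if_pos hq', hkap]
      show X k ω = Xbar jj ω
      rw [← hk, hXbar1]
    · have hq' : ¬ qzz (path ω) jj := hq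
      simp only [Xbarw]
      rw [if_neg hq']
      exact (hXbar2 ω jj fun k hk => hq ((hζrange ω jj).2 ⟨k, hk⟩)).symm
  have hWw : ∀ ω ℓ, Ww ℓ (path ω) =
      ((Z (ξ ℓ ω) ω, ξ ℓ ω - ξ (ℓ - 1) ω), Xbar (ξ ℓ ω) ω) := by
    intro ω ℓ
    simp only [Ww, hxiw, hXbarw]
    rfl
  -- every path is in Ghat
  have hGpath : ∀ ω, path ω ∈ Ghat := by
    intro ω t
    refine ⟨?_, ?_, ?_, ?_⟩
    · obtain ⟨k, hk1, hk2⟩ := (hinf ω MID.M t).1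
      exact ⟨k, hk1, Or.inl hk2⟩
    · obtain ⟨k, hk1, hk2⟩ := (hinf ω MID.M t).2
      exact ⟨k, hk1, Or.inl hk2⟩
    · obtain ⟨k, hk1, hk2⟩ := (hinf ω MID.M t).1
      exact ⟨k, hk1, Or.inl hk2⟩
    · obtain ⟨k, hk1, hk2⟩ := (hinf ω MID.M t).2
      exact ⟨k, hk1, Or.inl hk2⟩
  -- measurability of the conditioning set
  have hA₀ : MeasurableSet {ω | Z 0 ω = MID.M ∨ Z 0 ω = MID.I} := by
    have h : {ω | Z 0 ω = MID.M ∨ Z 0 ω = MID.I} = (Z 0) ⁻¹' {MID.M, MID.I} := by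
      ext ω; simp
    rw [h]
    exact hmZ 0 MeasurableSpace.measurableSet_top
  -- invariance of the path measure under the two-parameter shifts
  have hμT : ∀ m n : ℤ, (P.map path).map (Tmn m n) = P.map path := by
    intro m n
    have hF : Measurable (fun ω (k : ℤ) => X k ω) := measurable_pi_lambda _ fun k => hmX k
    have hG : Measurable (fun ω (k : ℤ) => Z k ω) := measurable_pi_lambda _ fun k => hmZ k
    have hFm : Measurable (fun ω (k : ℤ) => X (k + m) ω) :=
      measurable_pi_lambda _ fun k => hmX (k + m)
    have hGn : Measurable (fun ω (k : ℤ) => Z (k + n) ω) :=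
      measurable_pi_lambda _ fun k => hmZ (k + n)
    have hsm : Measurable (fun u : ℤ → ℝ => fun k => u (k + m)) :=
      measurable_pi_lambda _ fun k => measurable_pi_apply _
    have hsn : Measurable (fun u : ℤ → MID => fun k => u (k + n)) :=
      measurable_pi_lambda _ fun k => measurable_pi_apply _
    have hindep' : IndepFun (fun ω (k : ℤ) => X (k + m) ω) (fun ω (k : ℤ) => Z (k + n) ω) P :=
      hindep.comp hsm hsn
    have h1 := (ProbabilityTheory.indepFun_iff_map_prod_eq_prod_map_map
      hFm.aemeasurable hGn.aemeasurable).mp hindep'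
    have h2 := (ProbabilityTheory.indepFun_iff_map_prod_eq_prod_map_map
      hF.aemeasurable hG.aemeasurable).mp hindep
    have h3 : P.map (fun ω => ((fun k : ℤ => X (k + m) ω), (fun k : ℤ => Z (k + n) ω)))
        = P.map (fun ω => ((fun k : ℤ => X k ω), (fun k : ℤ => Z k ω))) := by
      rw [h1, h2, hXstat m, hZstat n]
    let QQ : (ℤ → ℝ) × (ℤ → MID) → PS := fun uz k => (uz.1 k, uz.2 k)
    have hQQ : Measurable QQ := measurable_pi_lambda _ fun k =>
      ((measurable_pi_apply k).comp measurable_fst).prodMk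
        ((measurable_pi_apply k).comp measurable_snd)
    calc (P.map path).map (Tmn m n)
        = P.map (Tmn m n ∘ path) := Measure.map_map (meas_Tmn m n) hpath
      _ = P.map (QQ ∘ (fun ω => ((fun k : ℤ => X (k + m) ω), (fun k : ℤ => Z (k + n) ω)))) := rfl
      _ = (P.map (fun ω => ((fun k : ℤ => X (k + m) ω), (fun k : ℤ => Z (k + n) ω)))).map QQ :=
          (Measure.map_map hQQ (hFm.prodMk hGn)).symm
      _ = (P.map (fun ω => ((fun k : ℤ => X k ω), (fun k : ℤ => Z k ω)))).map QQ := by rw [h3]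
      _ = P.map (QQ ∘ (fun ω => ((fun k : ℤ => X k ω), (fun k : ℤ => Z k ω)))) :=
          Measure.map_map hQQ (hF.prodMk hG)
      _ = P.map path := rfl
  -- the core identity : one-step stationarity
  have key1 : (P[|{ω | Z 0 ω = MID.M ∨ Z 0 ω = MID.I}]).map (Phiw 1 ∘ path)
      = (P[|{ω | Z 0 ω = MID.M ∨ Z 0 ω = MID.I}]).map (Phiw 0 ∘ path) := by
    ext S hS
    rw [Measure.map_apply ((meas_Phiw 1).comp hpath) hS,
        Measure.map_apply ((meas_Phiw 0).comp hpath) hS,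
        ProbabilityTheory.cond_apply hA₀, ProbabilityTheory.cond_apply hA₀]
    congr 1
    have htr : ∀ t : ℤ, {ω | Z 0 ω = MID.M ∨ Z 0 ω = MID.I} ∩ (Phiw t ∘ path) ⁻¹' S
        = path ⁻¹' (Ghat ∩ A0 ∩ Phiw t ⁻¹' S) := by
      intro t
      ext ω
      simp only [Set.mem_inter_iff, Set.mem_preimage, Set.mem_setOf_eq, Function.comp_apply]
      constructor
      · rintro ⟨h1, h2⟩
        exact ⟨⟨hGpath ω, h1⟩, h2⟩
      · rintro ⟨⟨_, h1⟩, h2⟩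
        exact ⟨h1, h2⟩
    have hmS : ∀ t : ℤ, MeasurableSet (Ghat ∩ A0 ∩ Phiw t ⁻¹' S) := fun t =>
      (measSet_Ghat.inter measSet_A0).inter (meas_Phiw t hS)
    rw [htr 1, htr 0, ← Measure.map_apply hpath (hmS 1), ← Measure.map_apply hpath (hmS 0)]
    -- now an identity for μ = P.map path
    have hpart1 : Ghat ∩ A0 ∩ Phiw 1 ⁻¹' S
        = ⋃ p : ℤ × ℤ, (Ghat ∩ Chat p.1 p.2 ∩ Phiw 1 ⁻¹' S) := by
      ext w
      simp only [Set.mem_inter_iff, Set.mem_iUnion]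
      constructor
      · rintro ⟨⟨hGw, hAw⟩, hSw⟩
        obtain ⟨n, m, hC⟩ := exists_Chat hGw hAw
        exact ⟨(n, m), ⟨hGw, hC⟩, hSw⟩
      · rintro ⟨p, ⟨hGw, hC⟩, hSw⟩
        exact ⟨⟨hGw, hC.2.1⟩, hSw⟩
    have hpart0 : Ghat ∩ A0 ∩ Phiw 0 ⁻¹' S
        = ⋃ p : ℤ × ℤ, (Ghat ∩ Dhat p.1 p.2 ∩ Phiw 0 ⁻¹' S) := by
      ext w
      simp only [Set.mem_inter_iff, Set.mem_iUnion]
      constructor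
      · rintro ⟨⟨hGw, hAw⟩, hSw⟩
        obtain ⟨n, m, hD⟩ := exists_Dhat hGw hAw
        exact ⟨(n, m), ⟨hGw, hD⟩, hSw⟩
      · rintro ⟨p, ⟨hGw, hD⟩, hSw⟩
        exact ⟨⟨hGw, hD.2.1⟩, hSw⟩
    have hdisj1 : Pairwise (Function.onFun Disjoint
        (fun p : ℤ × ℤ => Ghat ∩ Chat p.1 p.2 ∩ Phiw 1 ⁻¹' S)) := by
      intro p q hpq
      apply Set.disjoint_left.mpr
      rintro w ⟨⟨_, hC⟩, _⟩ ⟨⟨_, hC'⟩, _⟩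
      obtain ⟨h1, h2⟩ := Chat_unique hC hC'
      exact hpq (Prod.ext h1 h2)
    have hdisj0 : Pairwise (Function.onFun Disjoint
        (fun p : ℤ × ℤ => Ghat ∩ Dhat p.1 p.2 ∩ Phiw 0 ⁻¹' S)) := by
      intro p q hpq
      apply Set.disjoint_left.mpr
      rintro w ⟨⟨_, hD⟩, _⟩ ⟨⟨_, hD'⟩, _⟩
      obtain ⟨h1, h2⟩ := Dhat_unique hD hD'
      exact hpq (Prod.ext h1 h2)
    have hm1 : ∀ p : ℤ × ℤ, MeasurableSet (Ghat ∩ Chat p.1 p.2 ∩ Phiw 1 ⁻¹' S) := fun p =>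
      (measSet_Ghat.inter (measSet_Chat p.1 p.2)).inter (meas_Phiw 1 hS)
    have hm0 : ∀ p : ℤ × ℤ, MeasurableSet (Ghat ∩ Dhat p.1 p.2 ∩ Phiw 0 ⁻¹' S) := fun p =>
      (measSet_Ghat.inter (measSet_Dhat p.1 p.2)).inter (meas_Phiw 0 hS)
    rw [hpart1, hpart0, measure_iUnion hdisj1 hm1, measure_iUnion hdisj0 hm0]
    apply tsum_congr
    intro p
    obtain ⟨n, m⟩ := p
    have hcov : ∀ w : PS, w ∈ Ghat → w ∈ Chat n m → Phiw 0 (Tmn m n w) = Phiw 1 w := by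
      intro w hGw hC
      funext k
      show Ww (k + 0) (Tmn m n w) = Ww (k + 1) w
      rw [show k + (0:ℤ) = k by ring]
      exact Ww_Tmn hGw hC k
    have hTpre : Tmn m n ⁻¹' (Ghat ∩ Dhat n m ∩ Phiw 0 ⁻¹' S)
        = Ghat ∩ Chat n m ∩ Phiw 1 ⁻¹' S := by
      ext w
      simp only [Set.mem_preimage, Set.mem_inter_iff]
      constructor
      · rintro ⟨⟨hGw, hD⟩, hSw⟩
        have hC := Tmn_mem_Dhat.mp hD
        have hGw' := Tmn_mem_Ghat.mp hGw
        refine ⟨⟨hGw', hC⟩, ?_⟩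
        rwa [hcov w hGw' hC] at hSw
      · rintro ⟨⟨hGw, hC⟩, hSw⟩
        refine ⟨⟨Tmn_mem_Ghat.mpr hGw, Tmn_mem_Dhat.mpr hC⟩, ?_⟩
        rw [hcov w hGw hC]
        exact hSw
    calc (P.map path) (Ghat ∩ Chat n m ∩ Phiw 1 ⁻¹' S)
        = (P.map path) (Tmn m n ⁻¹' (Ghat ∩ Dhat n m ∩ Phiw 0 ⁻¹' S)) := by rw [hTpre]
      _ = ((P.map path).map (Tmn m n)) (Ghat ∩ Dhat n m ∩ Phiw 0 ⁻¹' S) :=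
          (Measure.map_apply (meas_Tmn m n) (hm0 (n, m))).symm
      _ = (P.map path) (Ghat ∩ Dhat n m ∩ Phiw 0 ⁻¹' S) := by rw [hμT m n]
  -- identify the two maps in the goal with Phiw j ∘ path, Phiw 0 ∘ path
  have hΦeq : ∀ t : ℤ, (fun ω => fun k : ℤ =>
      ((Z (ξ (k + t) ω) ω, ξ (k + t) ω - ξ (k + t - 1) ω), Xbar (ξ (k + t) ω) ω))
      = Phiw t ∘ path := by
    intro t
    funext ω
    funext k
    exact (hWw ω (k + t)).symm
  have hΦ0 : (fun ω => fun k : ℤ =>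
      ((Z (ξ k ω) ω, ξ k ω - ξ (k - 1) ω), Xbar (ξ k ω) ω)) = Phiw 0 ∘ path := by
    funext ω
    funext k
    show _ = Ww (k + 0) (path ω)
    rw [show k + (0:ℤ) = k from add_zero k]
    exact (hWw ω k).symm
  rw [hΦeq j, hΦ0]
  -- shift maps on the target space
  have hsfwd : Measurable (fun q : ℤ → (MID × ℤ) × ℝ => fun k => q (k + 1)) :=
    measurable_pi_lambda _ fun k => measurable_pi_apply _
  have hsbwd : Measurable (fun q : ℤ → (MID × ℤ) × ℝ => fun k => q (k - 1)) :=
    measurable_pi_lambda _ fun k => measurable_pi_apply _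
  have hcomp_f : ∀ t : ℤ, Phiw (t + 1) ∘ path
      = (fun q : ℤ → (MID × ℤ) × ℝ => fun k => q (k + 1)) ∘ (Phiw t ∘ path) := by
    intro t
    funext ω
    funext k
    show Ww (k + (t + 1)) (path ω) = Ww ((k + 1) + t) (path ω)
    rw [show k + (t + 1) = (k + 1) + t by ring]
  have hcomp_b : ∀ t : ℤ, Phiw (t - 1) ∘ path
      = (fun q : ℤ → (MID × ℤ) × ℝ => fun k => q (k - 1)) ∘ (Phiw t ∘ path) := by
    intro t
    funext ω
    funext k
    show Ww (k + (t - 1)) (path ω) = Ww ((k - 1) + t) (path ω)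
    rw [show k + (t - 1) = (k - 1) + t by ring]
  have keyneg : (P[|{ω | Z 0 ω = MID.M ∨ Z 0 ω = MID.I}]).map (Phiw (-1) ∘ path)
      = (P[|{ω | Z 0 ω = MID.M ∨ Z 0 ω = MID.I}]).map (Phiw 0 ∘ path) := by
    have h01 : Phiw (-1) ∘ path
        = (fun q : ℤ → (MID × ℤ) × ℝ => fun k => q (k - 1)) ∘ (Phiw 0 ∘ path) := by
      have := hcomp_b 0
      rwa [show (0:ℤ) - 1 = -1 by ring] at this
    have h10 : Phiw 0 ∘ path
        = (fun q : ℤ → (MID × ℤ) × ℝ => fun k => q (k - 1)) ∘ (Phiw 1 ∘ path) := by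
      have := hcomp_b 1
      rwa [show (1:ℤ) - 1 = 0 by ring] at this
    calc (P[|{ω | Z 0 ω = MID.M ∨ Z 0 ω = MID.I}]).map (Phiw (-1) ∘ path)
        = ((P[|{ω | Z 0 ω = MID.M ∨ Z 0 ω = MID.I}]).map (Phiw 0 ∘ path)).map
            (fun q : ℤ → (MID × ℤ) × ℝ => fun k => q (k - 1)) := by
          rw [h01, ← Measure.map_map hsbwd ((meas_Phiw 0).comp hpath)]
      _ = ((P[|{ω | Z 0 ω = MID.M ∨ Z 0 ω = MID.I}]).map (Phiw 1 ∘ path)).map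
            (fun q : ℤ → (MID × ℤ) × ℝ => fun k => q (k - 1)) := by rw [key1]
      _ = (P[|{ω | Z 0 ω = MID.M ∨ Z 0 ω = MID.I}]).map (Phiw 0 ∘ path) := by
          rw [Measure.map_map hsbwd ((meas_Phiw 1).comp hpath), ← h10]
  induction j using Int.induction_on with
  | zero => rfl
  | succ i ih =>
    rw [hcomp_f (i : ℤ), ← Measure.map_map hsfwd ((meas_Phiw (i : ℤ)).comp hpath), ih,
      Measure.map_map hsfwd ((meas_Phiw 0).comp hpath), ← hcomp_f 0,
      show (0:ℤ) + 1 = 1 by ring, key1]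
  | pred i ih =>
    rw [hcomp_b (-(i : ℤ)), ← Measure.map_map hsbwd ((meas_Phiw (-(i : ℤ))).comp hpath), ih,
      Measure.map_map hsbwd ((meas_Phiw 0).comp hpath)]
    have h0m1 : Phiw (0 - 1) ∘ path
        = (fun q : ℤ → (MID × ℤ) × ℝ => fun k => q (k - 1)) ∘ (Phiw 0 ∘ path) := hcomp_b 0
    rw [← h0m1, show (0:ℤ) - 1 = -1 by ring, keyneg]
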